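/- If f : I → (0,∞) is GA-convex on I ⊆ (0,∞) (i.e., f(u^{1-λ}v^{λ}) ≤ (1-λ)f(u) + λf(v)) and u, v ∈ I with u < v, then f(√(uv)) ≤ (1/(ln v − ln u)) ∫_u^v f(x)/x dx ≤ (f(u)+f(v))/2. -/

import Mathlib

open MeasureTheory intervalIntegral Set

theorem hermite_hadamard_GA_convex (I : Set ℝ) (hI : I ⊆ Set.Ioi (0:ℝ))
    (hIcc : Set.OrdConnected I) (f : ℝ → ℝ) (hfpos : ∀ x ∈ I, 0 < f x)
    (hf : ∀ a ∈ I, ∀ b ∈ I, ∀ l ∈ Set.Icc (0:ℝ) 1,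
      f (a ^ (1 - l) * b ^ l) ≤ (1 - l) * f a + l * f b)
    (u v : ℝ) (hu : u ∈ I) (hv : v ∈ I) (huv : u < v)
    (hint : IntervalIntegrable f MeasureTheory.volume u v) :
    f (Real.sqrt (u * v)) ≤ (1 / (Real.log v - Real.log u)) * ∫ x in u..v, f x / x ∧
      (1 / (Real.log v - Real.log u)) * ∫ x in u..v, f x / x ≤ (f u + f v) / 2 := by
  have hu0 : 0 < u := hI hu
  have hv0 : 0 < v := hI hv
  set L : ℝ := Real.log v - Real.log u with hLdef
  have hL : 0 < L := sub_pos.2 (Real.log_lt_log hu0 huv)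
  have hsub : Set.Icc u v ⊆ I := hIcc.out hu hv
  have hxpos : ∀ x ∈ Set.Icc u v, 0 < x := fun x hx => lt_of_lt_of_le hu0 hx.1
  -- pointwise upper bound from GA-convexity
  have hrep : ∀ x ∈ Set.Icc u v,
      f x ≤ f u + (f v - f u) * ((Real.log x - Real.log u) / L) := by
    intro x hx
    have hx0 := hxpos x hx
    set t := (Real.log x - Real.log u) / L with ht
    have ht0 : 0 ≤ t := div_nonneg (sub_nonneg.2 (Real.log_le_log hu0 hx.1)) hL.le
    have ht1 : t ≤ 1 := by
      rw [div_le_one hL]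
      have := Real.log_le_log hx0 hx.2
      simp [hLdef]; linarith
    have hx' : u ^ (1 - t) * v ^ t = x := by
      rw [Real.rpow_def_of_pos hu0, Real.rpow_def_of_pos hv0, ← Real.exp_add]
      have htL : t * (Real.log v - Real.log u) = Real.log x - Real.log u := by
        rw [ht, ← hLdef, div_mul_cancel₀ _ hL.ne']
      have hexp : Real.log u * (1 - t) + Real.log v * t = Real.log x := by
        linear_combination htL
      rw [hexp, Real.exp_log hx0]
    have h := hf u hu v hv t ⟨ht0, ht1⟩
    rw [hx'] at h
    linarith
  have hne : ∀ x ∈ Set.uIcc u v, x ≠ 0 := by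
    intro x hx
    rw [Set.uIcc_of_le huv.le] at hx
    exact (hxpos x hx).ne'
  have hint1 : IntervalIntegrable (fun x => f x / x) MeasureTheory.volume u v := by
    have hc : ContinuousOn (fun x : ℝ => x⁻¹) (Set.uIcc u v) :=
      ContinuousOn.inv₀ continuousOn_id hne
    simpa [div_eq_mul_inv] using hint.mul_continuousOn hc
  -- the right-hand inequality
  set G : ℝ → ℝ := fun x =>
    (f u + (f v - f u) * ((Real.log x - Real.log u) / L)) / x with hGdef
  have hGcont : ContinuousOn G (Set.uIcc u v) := by
    apply ContinuousOn.div _ continuousOn_id hne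
    apply continuousOn_const.add
    apply continuousOn_const.mul
    apply ContinuousOn.div_const
    apply ContinuousOn.sub _ continuousOn_const
    exact Real.continuousOn_log.mono (fun x hx => hne x hx)
  have hintG : IntervalIntegrable G MeasureTheory.volume u v :=
    hGcont.intervalIntegrable
  have hFderiv : ∀ x ∈ Set.uIcc u v,
      HasDerivAt (fun y => f u * (Real.log y - Real.log u) +
        ((f v - f u)/L) * ((Real.log y - Real.log u)^2/2)) (G x) x := by
    intro x hx
    have hx0 : x ≠ 0 := hne x hx
    have hxpos' : 0 < x := by
      rw [Set.uIcc_of_le huv.le] at hx; exact hxpos x hx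
    have hlog : HasDerivAt (fun y => Real.log y - Real.log u) (1/x) x := by
      simpa [one_div] using (Real.hasDerivAt_log hx0).sub_const (Real.log u)
    have h1 : HasDerivAt (fun y => f u * (Real.log y - Real.log u))
        (f u * (1/x)) x := hlog.const_mul _
    have h2' := (hlog.pow 2).div_const 2
    have h2 := h2'.const_mul ((f v - f u)/L)
    have h := h1.add h2
    refine h.congr_deriv ?_
    rw [hGdef]
    field_simp
    ring
  have hFTC : ∫ x in u..v, G x = L * ((f u + f v)/2) := by
    rw [intervalIntegral.integral_eq_sub_of_hasDerivAt hFderiv hintG]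
    have hLL : Real.log v - Real.log u = L := rfl
    field_simp [hLL]
    ring
  have hmono : (∫ x in u..v, f x / x) ≤ L * ((f u + f v)/2) := by
    rw [← hFTC]
    apply intervalIntegral.integral_mono_on huv.le hint1 hintG
    intro x hx
    have hx0 := hxpos x hx
    have h := hrep x hx
    rw [hGdef]
    exact div_le_div_of_nonneg_right h hx0.le
  -- the left-hand inequality
  set m := Real.sqrt (u * v) with hm
  have hmem2 : ∀ x ∈ Set.Icc u v, u*v/x ∈ Set.Icc u v := by
    intro x hx
    have hx0 := hxpos x hx
    constructor
    · rw [le_div_iff₀ hx0]; nlinarith [hx.2]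
    · rw [div_le_iff₀ hx0]; nlinarith [hx.1]
  have hpt : ∀ x ∈ Set.Icc u v, f m ≤ (f x + f (u*v/x))/2 := by
    intro x hx
    have hx0 := hxpos x hx
    have h := hf x (hsub hx) (u*v/x) (hsub (hmem2 x hx)) (1/2) (by norm_num)
    have e : (1:ℝ) - 1/2 = 1/2 := by norm_num
    rw [e] at h
    have key : x ^ ((1:ℝ)/2) * (u*v/x) ^ ((1:ℝ)/2) = m := by
      rw [← Real.mul_rpow hx0.le (by positivity)]
      rw [show x * (u*v/x) = u*v by field_simp]
      rw [hm, Real.sqrt_eq_rpow]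
    rw [key] at h
    linarith
  have hs : MeasurableSet (Set.Icc u v) := measurableSet_Icc
  set φ : ℝ → ℝ := fun x => u*v/x with hφ
  set φ' : ℝ → ℝ := fun x => -(u*v)/x^2 with hφ'
  have hφd : ∀ x ∈ Set.Icc u v, HasDerivWithinAt φ (φ' x) (Set.Icc u v) x := by
    intro x hx
    have hx0 := hxpos x hx
    have h2 : HasDerivAt φ ((0 * x - (u*v) * 1)/x^2) x :=
      (hasDerivAt_const x (u*v)).div (hasDerivAt_id x) hx0.ne'
    have : HasDerivAt φ (φ' x) x := by
      convert h2 using 1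
      rw [hφ']; ring
    exact this.hasDerivWithinAt
  have hinjφ : Set.InjOn φ (Set.Icc u v) := by
    intro x hx y hy h
    have hx0 := hxpos x hx
    have hy0 := hxpos y hy
    rw [hφ] at h
    simp only at h
    rw [div_eq_div_iff hx0.ne' hy0.ne'] at h
    have huv0 : (0:ℝ) < u*v := mul_pos hu0 hv0
    exact (mul_left_cancel₀ huv0.ne' h).symm
  have himg : φ '' Set.Icc u v = Set.Icc u v := by
    apply Set.Subset.antisymm
    · rintro y ⟨x, hx, rfl⟩
      exact hmem2 x hx
    · intro y hy
      have hy0 := hxpos y hy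
      refine ⟨u*v/y, hmem2 y hy, ?_⟩
      rw [hφ]
      field_simp
  have hsimp : ∀ x ∈ Set.Icc u v,
      |φ' x| • (f (φ x) / (φ x)) = f (u*v/x)/x := by
    intro x hx
    have hx0 := hxpos x hx
    have huv0 : (0:ℝ) < u*v := mul_pos hu0 hv0
    have habs : |φ' x| = u*v/x^2 := by
      rw [hφ']
      rw [abs_div, abs_neg, abs_of_pos huv0, abs_of_pos (pow_pos hx0 2)]
    rw [smul_eq_mul, habs, hφ]
    field_simp
  have hIntIcc : IntegrableOn (fun x => f x / x) (Set.Icc u v) :=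
    (intervalIntegrable_iff_integrableOn_Icc_of_le huv.le).1 hint1
  have hIntH : IntegrableOn (fun x => f (u*v/x)/x) (Set.Icc u v) := by
    have h0 : IntegrableOn (fun x => f x / x) (φ '' Set.Icc u v) := by
      rw [himg]; exact hIntIcc
    have h1 := (integrableOn_image_iff_integrableOn_abs_deriv_smul hs hφd hinjφ
      (fun x => f x / x)).1 h0
    apply h1.congr_fun _ hs
    intro x hx
    simpa using hsimp x hx
  have hEqInt : (∫ x in Set.Icc u v, f (u*v/x)/x) = ∫ x in Set.Icc u v, f x / x := by
    conv_rhs => rw [← himg]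
    rw [integral_image_eq_integral_abs_deriv_smul hs hφd hinjφ (fun x => f x / x)]
    apply setIntegral_congr_fun hs
    intro x hx
    simpa using (hsimp x hx).symm
  have hintH' : IntervalIntegrable (fun x => f (u*v/x)/x) MeasureTheory.volume u v :=
    (intervalIntegrable_iff_integrableOn_Icc_of_le huv.le).2 hIntH
  have hB : (∫ x in u..v, f (u*v/x)/x) = ∫ x in u..v, f x / x := by
    rw [intervalIntegral.integral_of_le huv.le, intervalIntegral.integral_of_le huv.le,
      ← integral_Icc_eq_integral_Ioc, ← integral_Icc_eq_integral_Ioc, hEqInt]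
  have h0notin : (0:ℝ) ∉ Set.uIcc u v := by
    rw [Set.uIcc_of_le huv.le]
    rintro ⟨h1, h2⟩
    linarith
  have hmid : f m * L = ∫ x in u..v, f m / x := by
    have h1 : (∫ x in u..v, f m / x) = f m * ∫ x in u..v, 1/x := by
      simp only [div_eq_mul_inv, one_mul]
      exact intervalIntegral.integral_const_mul _ _
    rw [h1, integral_one_div h0notin, Real.log_div hv0.ne' hu0.ne', hLdef]
  have hineq : (∫ x in u..v, f m / x) ≤ ∫ x in u..v, (f x / x + f (u*v/x)/x)/2 := by
    apply intervalIntegral.integral_mono_on huv.le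
    · exact (continuousOn_const.div continuousOn_id hne).intervalIntegrable
    · exact (hint1.add hintH').div_const 2
    · intro x hx
      have hx0 := hxpos x hx
      have h := hpt x hx
      have h2 : f m / x ≤ ((f x + f (u*v/x))/2) / x := div_le_div_of_nonneg_right h hx0.le
      have h3 : ((f x + f (u*v/x))/2) / x = (f x / x + f (u*v/x)/x)/2 := by ring
      linarith
  have hsplit : (∫ x in u..v, (f x / x + f (u*v/x)/x)/2) = ∫ x in u..v, f x / x := by
    rw [intervalIntegral.integral_div, intervalIntegral.integral_add hint1 hintH', hB]
    ring
  have hleftmul : f m * L ≤ ∫ x in u..v, f x / x := by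
    rw [hmid]
    calc (∫ x in u..v, f m / x) ≤ ∫ x in u..v, (f x / x + f (u*v/x)/x)/2 := hineq
      _ = ∫ x in u..v, f x / x := hsplit
  constructor
  · rw [one_div, inv_mul_eq_div]
    exact (le_div_iff₀ hL).2 hleftmul
  · rw [one_div, inv_mul_eq_div]
    rw [div_le_iff₀ hL]
    linarith
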